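/- Let p, q, r be natural numbers, let α ≠ β in Fin p, i ≠ j in Fin q, and k, l, γ, δ in Fin r with k ≠ l and γ ≠ δ, and let a₁, a₂ be nonzero complex numbers. On the index type Fin p × Fin q × Fin r define, via Kronecker products, T₁ = 1_p ⊗ E_{ij} ⊗ E_{kl} + a₁·(1_p ⊗ E_{ji} ⊗ E_{lk}) and T₂ = E_{αβ} ⊗ 1_q ⊗ E_{γδ} + a₂·(E_{βα} ⊗ 1_q ⊗ E_{δγ}). Then T₁ and T₂ commute if and only if the index sets {k, l} and {γ, δ} are disjoint (i.e., k ≠ γ, k ≠ δ, l ≠ γ and l ≠ δ). -/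

import Mathlib

open Matrix Kronecker

/-- Tripartite case of the Singleton Matrix Excitation Commutation theorem:
`T₁ = 1 ⊗ E_{ij} ⊗ E_{kl} + a₁ (1 ⊗ E_{ji} ⊗ E_{lk})` and
`T₂ = E_{αβ} ⊗ 1 ⊗ E_{γδ} + a₂ (E_{βα} ⊗ 1 ⊗ E_{δγ})` commute iff the index sets
`{k, l}` and `{γ, δ}` on the shared register are disjoint. -/
theorem stmt2 (p q r : ℕ) (α β : Fin p) (i j : Fin q) (k l γ δ : Fin r)
    (hαβ : α ≠ β) (hij : i ≠ j) (hkl : k ≠ l) (hγδ : γ ≠ δ)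
    (a₁ a₂ : ℂ) (ha₁ : a₁ ≠ 0) (ha₂ : a₂ ≠ 0)
    (T₁ T₂ : Matrix (Fin p × Fin q × Fin r) (Fin p × Fin q × Fin r) ℂ)
    (hT₁ : T₁ = (1 : Matrix (Fin p) (Fin p) ℂ) ⊗ₖ
          (single i j (1 : ℂ) ⊗ₖ single k l (1 : ℂ)) +
        a₁ • ((1 : Matrix (Fin p) (Fin p) ℂ) ⊗ₖ
          (single j i (1 : ℂ) ⊗ₖ single l k (1 : ℂ))))
    (hT₂ : T₂ = single α β (1 : ℂ) ⊗ₖ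
          ((1 : Matrix (Fin q) (Fin q) ℂ) ⊗ₖ single γ δ (1 : ℂ)) +
        a₂ • (single β α (1 : ℂ) ⊗ₖ
          ((1 : Matrix (Fin q) (Fin q) ℂ) ⊗ₖ single δ γ (1 : ℂ)))) :
    T₁ * T₂ = T₂ * T₁ ↔ (k ≠ γ ∧ k ≠ δ ∧ l ≠ γ ∧ l ≠ δ) := by
  subst hT₁ hT₂
  constructor
  · intro h
    refine ⟨?_, ?_, ?_, ?_⟩
    · rintro rfl
      -- now γ = k
      have h2 := congrFun (congrFun h (β, i, δ)) (α, j, l)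
      simp [add_mul, mul_add, Matrix.smul_mul, Matrix.mul_smul, smul_smul,
        ← mul_kronecker_mul, Matrix.add_apply, Matrix.smul_apply,
        Matrix.kroneckerMap_apply, hαβ, hij, hkl, hγδ, hαβ.symm, hij.symm,
        hkl.symm, hγδ.symm, ha₁, ha₂] at h2
      try first
        | exact h2
        | exact ha₁ h2 | exact ha₁ h2.symm
        | exact ha₂ h2 | exact ha₂ h2.symm
        | exact one_ne_zero h2 | exact zero_ne_one h2
        | simp_all
    · rintro rfl
      -- now δ = k
      have h2 := congrFun (congrFun h (α, i, γ)) (β, j, l)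
      simp [add_mul, mul_add, Matrix.smul_mul, Matrix.mul_smul, smul_smul,
        ← mul_kronecker_mul, Matrix.add_apply, Matrix.smul_apply,
        Matrix.kroneckerMap_apply, hαβ, hij, hkl, hγδ, hαβ.symm, hij.symm,
        hkl.symm, hγδ.symm, ha₁, ha₂] at h2
      try first
        | exact h2
        | exact ha₁ h2 | exact ha₁ h2.symm
        | exact ha₂ h2 | exact ha₂ h2.symm
        | exact one_ne_zero h2 | exact zero_ne_one h2
        | simp_all
    · rintro rfl
      -- now γ = l
      have h2 := congrFun (congrFun h (α, i, k)) (β, j, δ)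
      simp [add_mul, mul_add, Matrix.smul_mul, Matrix.mul_smul, smul_smul,
        ← mul_kronecker_mul, Matrix.add_apply, Matrix.smul_apply,
        Matrix.kroneckerMap_apply, hαβ, hij, hkl, hγδ, hαβ.symm, hij.symm,
        hkl.symm, hγδ.symm, ha₁, ha₂] at h2
      try first
        | exact h2
        | exact ha₁ h2 | exact ha₁ h2.symm
        | exact ha₂ h2 | exact ha₂ h2.symm
        | exact one_ne_zero h2 | exact zero_ne_one h2
        | simp_all
    · rintro rfl
      -- now δ = l
      have h2 := congrFun (congrFun h (β, i, k)) (α, j, γ)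
      simp [add_mul, mul_add, Matrix.smul_mul, Matrix.mul_smul, smul_smul,
        ← mul_kronecker_mul, Matrix.add_apply, Matrix.smul_apply,
        Matrix.kroneckerMap_apply, hαβ, hij, hkl, hγδ, hαβ.symm, hij.symm,
        hkl.symm, hγδ.symm, ha₁, ha₂] at h2
      try first
        | exact h2
        | exact ha₁ h2 | exact ha₁ h2.symm
        | exact ha₂ h2 | exact ha₂ h2.symm
        | exact one_ne_zero h2 | exact zero_ne_one h2
        | simp_all
  · rintro ⟨h1, h2, h3, h4⟩
    have e1 : ((1 : Matrix (Fin p) (Fin p) ℂ) ⊗ₖ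
          (single i j (1 : ℂ) ⊗ₖ single k l (1 : ℂ)) +
        a₁ • ((1 : Matrix (Fin p) (Fin p) ℂ) ⊗ₖ
          (single j i (1 : ℂ) ⊗ₖ single l k (1 : ℂ)))) *
      (single α β (1 : ℂ) ⊗ₖ
          ((1 : Matrix (Fin q) (Fin q) ℂ) ⊗ₖ single γ δ (1 : ℂ)) +
        a₂ • (single β α (1 : ℂ) ⊗ₖ
          ((1 : Matrix (Fin q) (Fin q) ℂ) ⊗ₖ single δ γ (1 : ℂ)))) = 0 := by
      simp [add_mul, mul_add, Matrix.smul_mul, Matrix.mul_smul, smul_smul,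
        ← mul_kronecker_mul, h1, h2, h3, h4, h1.symm, h2.symm, h3.symm, h4.symm]
    have e2 : (single α β (1 : ℂ) ⊗ₖ
          ((1 : Matrix (Fin q) (Fin q) ℂ) ⊗ₖ single γ δ (1 : ℂ)) +
        a₂ • (single β α (1 : ℂ) ⊗ₖ
          ((1 : Matrix (Fin q) (Fin q) ℂ) ⊗ₖ single δ γ (1 : ℂ)))) *
      ((1 : Matrix (Fin p) (Fin p) ℂ) ⊗ₖ
          (single i j (1 : ℂ) ⊗ₖ single k l (1 : ℂ)) +
        a₁ • ((1 : Matrix (Fin p) (Fin p) ℂ) ⊗ₖ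
          (single j i (1 : ℂ) ⊗ₖ single l k (1 : ℂ)))) = 0 := by
      simp [add_mul, mul_add, Matrix.smul_mul, Matrix.mul_smul, smul_smul,
        ← mul_kronecker_mul, h1, h2, h3, h4, h1.symm, h2.symm, h3.symm, h4.symm]
    rw [e1, e2]
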